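/- Let μ be a probability measure on ℝ² with continuous marginal cumulative distribution functions F_X and F_Y and support S, and let μ_X and μ_Y denote the two marginal distributions of μ. Suppose there exist real numbers x₁ < x* < x₂ and y₁ < y* < y₂ such that the five points (x₁,y₁), (x₁,y₂), (x₂,y₁), (x₂,y₂), (x*,y*) all lie in S. Then there do not exist functions f : ℝ → ℝ and g : ℝ → ℝ and a constant c such that F_X(x)·F_Y(y) − f(x) − g(y) = c for all (x,y) ∈ S; that is, no function of the form d_ρ(x,y) = F_X(x)F_Y(y) − f(x) − g(y) is constant on S. -/

import Mathlib

open MeasureTheory Set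

lemma aux_support_pos {μ : Measure (ℝ × ℝ)} {S : Set (ℝ × ℝ)}
    (hSclosed : IsClosed S) (hSfull : μ Sᶜ = 0)
    (hSmin : ∀ T : Set (ℝ × ℝ), IsClosed T → μ Tᶜ = 0 → S ⊆ T)
    {U : Set (ℝ × ℝ)} (hU : IsOpen U) (hμU : μ U = 0)
    {p : ℝ × ℝ} (hp : p ∈ S) (hpU : p ∈ U) : False := by
  have hT : IsClosed (S \ U) := hSclosed.sdiff hU
  have hTc : μ (S \ U)ᶜ = 0 := by
    have : (S \ U)ᶜ = Sᶜ ∪ U := by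
      rw [diff_eq, compl_inter, compl_compl]
    rw [this]
    exact measure_union_null hSfull hμU
  exact (hSmin _ hT hTc hp).2 hpU

lemma aux_strip_zero {μ : Measure (ℝ × ℝ)} [IsProbabilityMeasure μ]
    {a b : ℝ} (hab : a ≤ b)
    (h : μ (Iic a ×ˢ (univ : Set ℝ)) = μ (Iic b ×ˢ (univ : Set ℝ))) :
    μ (Ioo a b ×ˢ (univ : Set ℝ)) = 0 := by
  have hsub : Ioo a b ×ˢ (univ : Set ℝ) ⊆
      (Iic b ×ˢ (univ : Set ℝ)) \ (Iic a ×ˢ (univ : Set ℝ)) := by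
    rintro ⟨x, y⟩ ⟨⟨h1, h2⟩, -⟩
    refine ⟨⟨h2.le, trivial⟩, ?_⟩
    rintro ⟨h3, -⟩
    exact absurd h3 (not_le.mpr h1)
  have hsub2 : (Iic a ×ˢ (univ : Set ℝ)) ⊆ (Iic b ×ˢ (univ : Set ℝ)) :=
    prod_mono_left (Iic_subset_Iic.mpr hab)
  have hdiff : μ ((Iic b ×ˢ (univ : Set ℝ)) \ (Iic a ×ˢ (univ : Set ℝ))) = 0 := by
    rw [measure_diff hsub2 ((measurableSet_Iic.prod MeasurableSet.univ).nullMeasurableSet)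
      (measure_ne_top μ _), ← h, tsub_self]
  exact le_antisymm (le_trans (measure_mono hsub) hdiff.le) (zero_le)

lemma aux_strip_zero' {μ : Measure (ℝ × ℝ)} [IsProbabilityMeasure μ]
    {a b : ℝ} (hab : a ≤ b)
    (h : μ ((univ : Set ℝ) ×ˢ Iic a) = μ ((univ : Set ℝ) ×ˢ Iic b)) :
    μ ((univ : Set ℝ) ×ˢ Ioo a b) = 0 := by
  have hsub : (univ : Set ℝ) ×ˢ Ioo a b ⊆
      ((univ : Set ℝ) ×ˢ Iic b) \ ((univ : Set ℝ) ×ˢ Iic a) := by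
    rintro ⟨x, y⟩ ⟨-, h1, h2⟩
    refine ⟨⟨trivial, h2.le⟩, ?_⟩
    rintro ⟨-, h3⟩
    exact absurd h3 (not_le.mpr h1)
  have hsub2 : ((univ : Set ℝ) ×ˢ Iic a) ⊆ ((univ : Set ℝ) ×ˢ Iic b) :=
    prod_mono_right (Iic_subset_Iic.mpr hab)
  have hdiff : μ (((univ : Set ℝ) ×ˢ Iic b) \ ((univ : Set ℝ) ×ˢ Iic a)) = 0 := by
    rw [measure_diff hsub2 ((MeasurableSet.univ.prod measurableSet_Iic).nullMeasurableSet)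
      (measure_ne_top μ _), ← h, tsub_self]
  exact le_antisymm (le_trans (measure_mono hsub) hdiff.le) (zero_le)

theorem stmt_14
    (μ : Measure (ℝ × ℝ)) [IsProbabilityMeasure μ]
    (FX FY : ℝ → ℝ)
    (hFX : ∀ x, FX x = (μ (Iic x ×ˢ (univ : Set ℝ))).toReal)
    (hFY : ∀ y, FY y = (μ ((univ : Set ℝ) ×ˢ Iic y)).toReal)
    (hFXcont : Continuous FX) (hFYcont : Continuous FY)
    (S : Set (ℝ × ℝ))
    (hSclosed : IsClosed S) (hSfull : μ Sᶜ = 0)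
    (hSmin : ∀ T : Set (ℝ × ℝ), IsClosed T → μ Tᶜ = 0 → S ⊆ T)
    (x₁ xs x₂ y₁ ys y₂ : ℝ)
    (hx1 : x₁ < xs) (hx2 : xs < x₂) (hy1 : y₁ < ys) (hy2 : ys < y₂)
    (h11 : (x₁, y₁) ∈ S) (h12 : (x₁, y₂) ∈ S)
    (h21 : (x₂, y₁) ∈ S) (h22 : (x₂, y₂) ∈ S)
    (hss : (xs, ys) ∈ S) :
    ¬ ∃ (f g : ℝ → ℝ) (c : ℝ), ∀ p ∈ S, FX p.1 * FY p.2 - f p.1 - g p.2 = c := by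
  rintro ⟨f, g, c, h⟩
  have e11 := h _ h11
  have e12 := h _ h12
  have e21 := h _ h21
  have e22 := h _ h22
  simp only at e11 e12 e21 e22
  have key : (FX x₁ - FX x₂) * (FY y₁ - FY y₂) = 0 := by
    linear_combination e11 - e12 - e21 + e22
  rcases mul_eq_zero.mp key with hk | hk
  · have hFXeq : FX x₁ = FX x₂ := by linarith
    have hm : μ (Iic x₁ ×ˢ (univ : Set ℝ)) = μ (Iic x₂ ×ˢ (univ : Set ℝ)) :=
      (ENNReal.toReal_eq_toReal_iff' (measure_ne_top μ _) (measure_ne_top μ _)).mp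
        (by rw [← hFX x₁, ← hFX x₂]; exact hFXeq)
    have hz : μ (Ioo x₁ x₂ ×ˢ (univ : Set ℝ)) = 0 :=
      aux_strip_zero (le_of_lt (hx1.trans hx2)) hm
    exact aux_support_pos hSclosed hSfull hSmin
      (isOpen_Ioo.prod isOpen_univ) hz hss ⟨⟨hx1, hx2⟩, trivial⟩
  · have hFYeq : FY y₁ = FY y₂ := by linarith
    have hm : μ ((univ : Set ℝ) ×ˢ Iic y₁) = μ ((univ : Set ℝ) ×ˢ Iic y₂) :=
      (ENNReal.toReal_eq_toReal_iff' (measure_ne_top μ _) (measure_ne_top μ _)).mp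
        (by rw [← hFY y₁, ← hFY y₂]; exact hFYeq)
    have hz : μ ((univ : Set ℝ) ×ˢ Ioo y₁ y₂) = 0 :=
      aux_strip_zero' (le_of_lt (hy1.trans hy2)) hm
    exact aux_support_pos hSclosed hSfull hSmin
      (isOpen_univ.prod isOpen_Ioo) hz hss ⟨trivial, hy1, hy2⟩
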